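/- Let φ ∈ L^∞(𝕋), λ ∈ 𝕋, and suppose φ = f + conj(C_λ f) for some f ∈ H² ∩ L^∞. Then the Toeplitz operator T_φ is C_λ-symmetric on H², i.e., C_λ T_φ C_λ = T_φ*. -/

import Mathlib

open MeasureTheory Complex Real AddCircle
open scoped ComplexConjugate

noncomputable section

instance fact2pi : Fact (0 < 2 * π) := ⟨by positivity⟩

/-- Normalized Haar measure on the circle. -/
abbrev μH : Measure (AddCircle (2 * π)) := AddCircle.haarAddCircle

/-- The Hardy space `H²`, realized as the closed span of the nonnegative Fourier modes
inside `L²(𝕋)`. -/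
def HardyH2 : Submodule ℂ (Lp ℂ 2 μH) :=
  (Submodule.span ℂ (Set.range fun n : ℕ => fourierLp 2 (n : ℤ))).topologicalClosure

instance : CompleteSpace HardyH2 :=
  (Submodule.isClosed_topologicalClosure _).completeSpace_coe

/-- The Szegő (orthogonal) projection `P : L²(𝕋) → H²`. -/
def szego : Lp ℂ 2 μH →L[ℂ] HardyH2 := (HardyH2 : Submodule ℂ (Lp ℂ 2 μH)).orthogonalProjectionOnto

/-- The Toeplitz operator `T_φ f = P(φ f)` with symbol `φ`. -/
def toeplitz (φ : AddCircle (2 * π) → ℂ)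
    (hφ : ∀ f : Lp ℂ 2 μH, MemLp (fun x => φ x * f x) 2 μH) (g : HardyH2) : HardyH2 :=
  szego ((hφ (g : Lp ℂ 2 μH)).toLp _)

/-- The Möbius transformation `φ_a`. -/
def moebius (a z : ℂ) : ℂ := (a - z) / (1 - conj a * z)

/-- If `φ = f + conj (C_λ f)` with `f ∈ H² ∩ L^∞`, then the Toeplitz operator `T_φ` is
`C_λ`-symmetric: `C_λ T_φ C_λ = T_φ*`, expressed via inner products. -/
theorem stmt8 (c : AddCircle (2 * π))
    (CL : Lp ℂ 2 μH → Lp ℂ 2 μH)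
    (hCL : ∀ h : Lp ℂ 2 μH,
      (CL h : AddCircle (2 * π) → ℂ) =ᵐ[μH] fun x => conj (h (c - x)))
    (hCLH : ∀ h : Lp ℂ 2 μH, h ∈ HardyH2 → CL h ∈ HardyH2)
    (fc : AddCircle (2 * π) → ℂ)
    (hfb : MemLp fc ⊤ μH) (hf2 : MemLp fc 2 μH) (hfH : hf2.toLp fc ∈ HardyH2)
    (Cf : AddCircle (2 * π) → ℂ) (hCf : ∀ x, Cf x = conj (fc (c - x)))
    (φ : AddCircle (2 * π) → ℂ) (hφdef : ∀ x, φ x = fc x + conj (Cf x))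
    (hφm : ∀ h : Lp ℂ 2 μH, MemLp (fun x => φ x * h x) 2 μH) :
    ∀ g h : HardyH2,
      (inner ℂ (CL ((toeplitz φ hφm ⟨CL (g : Lp ℂ 2 μH), hCLH _ g.2⟩ : HardyH2) : Lp ℂ 2 μH))
          ((h : HardyH2) : Lp ℂ 2 μH) : ℂ) =
        (inner ℂ ((g : HardyH2) : Lp ℂ 2 μH)
          ((toeplitz φ hφm h : HardyH2) : Lp ℂ 2 μH) : ℂ) := by
  -- symmetry of φ
  have hφsymm : ∀ x, φ (c - x) = φ x := by
    intro x
    rw [hφdef, hφdef, hCf, hCf, sub_sub_cancel]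
    simp only [Complex.conj_conj]
    ring
  -- projection property
  have proj : ∀ (u v : Lp ℂ 2 μH), v ∈ HardyH2 →
      (inner ℂ v (((szego u : HardyH2) : Lp ℂ 2 μH)) : ℂ) = inner ℂ v u := by
    intro u v hv
    have h0 : (inner ℂ v (u - ((szego u : HardyH2) : Lp ℂ 2 μH)) : ℂ) = 0 :=
      Submodule.inner_right_of_mem_orthogonal hv
        (Submodule.sub_starProjection_mem_orthogonal (K := HardyH2) u)
    rw [inner_sub_right] at h0
    exact (sub_eq_zero.mp h0).symm
  -- symmetry of the pairing with CL
  have innCL : ∀ u v : Lp ℂ 2 μH, (inner ℂ (CL u) v : ℂ) = inner ℂ (CL v) u := by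
    intro u v
    rw [L2.inner_def, L2.inner_def]
    simp only [RCLike.inner_apply']
    have h1 : (fun x => conj ((CL u) x) * v x) =ᵐ[μH] fun x => u (c - x) * v x := by
      filter_upwards [hCL u] with x hx
      rw [hx, Complex.conj_conj]
    have h2 : (fun x => conj ((CL v) x) * u x) =ᵐ[μH] fun x => v (c - x) * u x := by
      filter_upwards [hCL v] with x hx
      rw [hx, Complex.conj_conj]
    rw [integral_congr_ae h1, integral_congr_ae h2]
    have hch := integral_sub_left_eq_self (fun x => (v (c - x) : ℂ) * u x) μH c
    simp only [sub_sub_cancel] at hch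
    rw [← hch]
    exact integral_congr_ae (Filter.Eventually.of_forall fun x => mul_comm _ _)
  -- key integral identity
  have key : ∀ g h : Lp ℂ 2 μH,
      (inner ℂ (CL h) ((hφm (CL g)).toLp _ : Lp ℂ 2 μH) : ℂ) =
        inner ℂ g ((hφm h).toLp _ : Lp ℂ 2 μH) := by
    intro g h
    rw [L2.inner_def, L2.inner_def]
    simp only [RCLike.inner_apply']
    have h1 : (fun x => conj ((CL h) x) * (((hφm (CL g)).toLp _ : Lp ℂ 2 μH) x))
        =ᵐ[μH] fun x => h (c - x) * (φ x * conj (g (c - x))) := by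
      filter_upwards [hCL h, hCL g, (hφm (CL g)).coeFn_toLp] with x hx hgx htx
      rw [htx, hx, Complex.conj_conj, hgx]
    have h2 : (fun x => conj (g x) * (((hφm h).toLp _ : Lp ℂ 2 μH) x))
        =ᵐ[μH] fun x => conj (g x) * (φ x * h x) := by
      filter_upwards [(hφm h).coeFn_toLp] with x htx
      rw [htx]
    rw [integral_congr_ae h1, integral_congr_ae h2]
    have hch := integral_sub_left_eq_self
      (fun x => (h x : ℂ) * (φ (c - x) * conj (g x))) μH c
    simp only [sub_sub_cancel] at hch
    rw [hch]
    exact integral_congr_ae (Filter.Eventually.of_forall fun x =>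
      show (h x : ℂ) * (φ (c - x) * conj (g x)) = conj (g x) * (φ x * h x) by
        rw [hφsymm x]; ring)
  -- main computation
  intro g h
  rw [innCL]
  show (inner ℂ (CL (h : Lp ℂ 2 μH))
      ((szego ((hφm (CL (g : Lp ℂ 2 μH))).toLp _) : HardyH2) : Lp ℂ 2 μH) : ℂ) =
    (inner ℂ ((g : HardyH2) : Lp ℂ 2 μH)
      ((szego ((hφm ((h : HardyH2) : Lp ℂ 2 μH)).toLp _) : HardyH2) : Lp ℂ 2 μH) : ℂ)
  rw [proj _ _ (hCLH _ h.2), proj _ _ g.2]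
  exact key _ _

end
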